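/- Main theorem: For every simple graph G on n vertices, φ(G) ≥ n/(n − \bar{\bar d}(G)), where \bar{\bar d}(G) is the quadratic mean of the degrees. Equality holds if and only if φ(G) divides n and G is regular of degree n(φ(G)−1)/φ(G). -/

import Mathlib

open Finset

/-- A δ-set in a graph: every vertex in the set has degree at most `n - |S|`. -/
def IsDeltaSet {V : Type*} [Fintype V] (G : SimpleGraph V) [DecidableRel G.Adj]
    (S : Finset V) : Prop :=
  ∀ v ∈ S, G.degree v ≤ Fintype.card V - S.card

/-- The generalized chromatic number: the least `r` such that the vertex set
partitions into `r` δ-sets. -/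
noncomputable def genChrom {V : Type*} [Fintype V] [DecidableEq V]
    (G : SimpleGraph V) [DecidableRel G.Adj] : ℕ :=
  sInf {r | ∃ f : V → Fin r, ∀ i, IsDeltaSet G (Finset.univ.filter fun v => f v = i)}

/-- Quadratic mean of the degree sequence. -/
noncomputable def qmDeg {V : Type*} [Fintype V] (G : SimpleGraph V) [DecidableRel G.Adj] : ℝ :=
  Real.sqrt ((∑ v, (G.degree v : ℝ) ^ 2) / Fintype.card V)

/-- `k`-th elementary symmetric polynomial of `x : Fin r → ℝ`. -/
def esym {r : ℕ} (k : ℕ) (x : Fin r → ℝ) : ℝ :=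
  ∑ t ∈ Finset.univ.powersetCard k, ∏ i ∈ t, x i

private lemma tangent_aux {n c x : ℝ} (hxn : x ≤ n) (hc : 2*c ≤ n) :
    x*(n-x)^2 ≤ c*(n-c)^2 + (n-c)*(n-3*c)*(x-c) := by
  have key : c*(n-c)^2 + (n-c)*(n-3*c)*(x-c) - x*(n-x)^2 = (x-c)^2*(2*n-2*c-x) := by ring
  nlinarith [mul_nonneg (sq_nonneg (x-c)) (by linarith : (0:ℝ) ≤ 2*n-2*c-x)]

private lemma setNonempty {V : Type*} [Fintype V] [DecidableEq V]
    (G : SimpleGraph V) [DecidableRel G.Adj] :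
    Fintype.card V ∈ {r | ∃ f : V → Fin r, ∀ i, IsDeltaSet G (Finset.univ.filter fun v => f v = i)} := by
  refine ⟨fun v => (Fintype.equivFin V) v, fun i v hv => ?_⟩
  simp only [mem_filter, mem_univ, true_and] at hv
  have hcard : (Finset.univ.filter fun v => (Fintype.equivFin V) v = i).card ≤ 1 := by
    refine Finset.card_le_one.2 fun a ha b hb => ?_
    simp only [mem_filter, mem_univ, true_and] at ha hb
    exact (Fintype.equivFin V).injective (ha.trans hb.symm)
  have h1 : 1 ≤ (Finset.univ.filter fun v => (Fintype.equivFin V) v = i).card :=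
    Finset.card_pos.2 ⟨v, by simp [hv]⟩
  have : (Finset.univ.filter fun v => (Fintype.equivFin V) v = i).card = 1 := le_antisymm hcard h1
  rw [this]
  exact Nat.le_sub_one_of_lt (G.degree_lt_card_verts v)

private lemma key_lemma {V : Type*} [Fintype V] [DecidableEq V] (G : SimpleGraph V)
    [DecidableRel G.Adj] (hn : 0 < Fintype.card V) {r : ℕ} (hr : 1 ≤ r) (f : V → Fin r)
    (hf : ∀ i, IsDeltaSet G (Finset.univ.filter fun v => f v = i)) :
    (r:ℝ)^2 * ∑ v, (G.degree v:ℝ)^2 ≤ (Fintype.card V:ℝ)^3 * ((r:ℝ)-1)^2 ∧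
    ((r:ℝ)^2 * ∑ v, (G.degree v:ℝ)^2 = (Fintype.card V:ℝ)^3 * ((r:ℝ)-1)^2 →
      ∃ m : ℕ, r * m = Fintype.card V ∧ ∀ v, G.degree v = Fintype.card V - m) := by
  set n := Fintype.card V with hn_def
  -- the case r = 1
  rcases eq_or_lt_of_le hr with hr1 | hr2
  · -- r = 1 : every degree is 0
    subst hr1
    have hdeg0 : ∀ v, G.degree v = 0 := by
      intro v
      have hfull : (Finset.univ.filter fun w => f w = f v) = Finset.univ := by
        refine Finset.filter_true_of_mem fun w _ => ?_
        exact Subsingleton.elim _ _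
      have := hf (f v) v (by simp)
      rw [hfull, Finset.card_univ] at this
      omega
    have hs : ∑ v, (G.degree v:ℝ)^2 = 0 := by
      apply Finset.sum_eq_zero; intro v _; rw [hdeg0 v]; norm_num
    constructor
    · rw [hs]; norm_num
    · intro _
      exact ⟨n, by omega, fun v => by rw [hdeg0 v]; omega⟩
  · -- r ≥ 2
    set x : Fin r → ℝ := fun i => ((Finset.univ.filter fun v => f v = i).card : ℝ) with hx_def
    have hx0 : ∀ i, 0 ≤ x i := fun i => Nat.cast_nonneg _
    have hxn : ∀ i, x i ≤ n := by
      intro i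
      have h := (Finset.card_filter_le Finset.univ (fun v => f v = i)).trans
        (le_of_eq (Finset.card_univ))
      simp only [hx_def]
      exact_mod_cast h
    have hcards : ∑ i, (Finset.univ.filter fun v => f v = i).card = n :=
      (Finset.card_eq_sum_card_fiberwise (fun v _ => Finset.mem_univ (f v))).symm.trans
        Finset.card_univ
    have hxsum : ∑ i, x i = n := by
      rw [hx_def]
      push_cast; exact_mod_cast hcards
    have hdegle : ∀ v, (G.degree v : ℝ) ≤ n - x (f v) := by
      intro v
      have h1 := hf (f v) v (by simp)
      have h2 : (Finset.univ.filter fun w => f w = f v).card ≤ n := Finset.card_filter_le _ _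
      have := Nat.cast_le (α := ℝ) |>.2 h1
      rwa [Nat.cast_sub h2] at this
    have hA : ∀ v, (G.degree v:ℝ)^2 ≤ (n - x (f v))^2 := fun v =>
      pow_le_pow_left₀ (Nat.cast_nonneg _) (hdegle v) 2
    have hgroup : ∑ v, ((n:ℝ) - x (f v))^2 = ∑ i, x i * ((n:ℝ) - x i)^2 := by
      rw [← Finset.sum_fiberwise' Finset.univ f (fun j => ((n:ℝ) - x j)^2)]
      refine Finset.sum_congr rfl fun i _ => ?_
      rw [Finset.sum_const, nsmul_eq_mul]
    have hrRpos : (0:ℝ) < (r:ℝ) := by exact_mod_cast (by omega : 0 < r)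
    have hr0 : (r:ℝ) ≠ 0 := ne_of_gt hrRpos
    have hr2R : (2:ℝ) ≤ (r:ℝ) := by exact_mod_cast hr2
    have hnRpos : (0:ℝ) < (n:ℝ) := by exact_mod_cast hn
    obtain ⟨c, hrc⟩ : ∃ c : ℝ, (r:ℝ) * c = (n:ℝ) := ⟨(n:ℝ)/(r:ℝ), by field_simp⟩
    have hcval : c = (n:ℝ)/(r:ℝ) := by rw [eq_div_iff hr0]; linear_combination hrc
    have hc0 : 0 ≤ c := by rw [hcval]; positivity
    have hc2 : 2*c ≤ (n:ℝ) := by nlinarith [mul_nonneg (by linarith : (0:ℝ) ≤ (r:ℝ) - 2) hc0]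
    have hB : ∀ i, x i * ((n:ℝ) - x i)^2 ≤ c*((n:ℝ)-c)^2 + ((n:ℝ)-c)*((n:ℝ)-3*c)*(x i - c) :=
      fun i => tangent_aux (hxn i) hc2
    have hBsum : ∑ i, (c*((n:ℝ)-c)^2 + ((n:ℝ)-c)*((n:ℝ)-3*c)*(x i - c)) = r * (c*((n:ℝ)-c)^2) := by
      rw [Finset.sum_add_distrib, Finset.sum_const, ← Finset.mul_sum, Finset.sum_sub_distrib,
        hxsum, Finset.sum_const, Finset.card_univ, Fintype.card_fin, nsmul_eq_mul]
      rw [nsmul_eq_mul]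
      have : (n:ℝ) - (r:ℝ)*c = 0 := by rw [hrc]; ring
      rw [this]; ring
    have hval : (r:ℝ)^2 * ((r:ℝ) * (c*((n:ℝ)-c)^2)) = (n:ℝ)^3 * ((r:ℝ)-1)^2 := by
      rw [hcval]; field_simp
    have hchain1 : ∑ v, (G.degree v:ℝ)^2 ≤ ∑ i, x i * ((n:ℝ) - x i)^2 := by
      rw [← hgroup]; exact Finset.sum_le_sum fun v _ => hA v
    have hchain2 : ∑ i, x i * ((n:ℝ) - x i)^2 ≤ (r:ℝ) * (c*((n:ℝ)-c)^2) := by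
      rw [← hBsum]; exact Finset.sum_le_sum fun i _ => hB i
    have hr2pos : (0:ℝ) < (r:ℝ)^2 := by positivity
    constructor
    · calc (r:ℝ)^2 * ∑ v, (G.degree v:ℝ)^2
          ≤ (r:ℝ)^2 * ((r:ℝ) * (c*((n:ℝ)-c)^2)) := by
            apply mul_le_mul_of_nonneg_left (hchain1.trans hchain2) (le_of_lt hr2pos)
        _ = (n:ℝ)^3 * ((r:ℝ)-1)^2 := hval
    · intro heq
      -- both inequalities are equalities
      have hEQ : ∑ v, (G.degree v:ℝ)^2 = (r:ℝ) * (c*((n:ℝ)-c)^2) := by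
        have := heq.trans hval.symm
        exact mul_left_cancel₀ (ne_of_gt hr2pos) this
      have hEq1 : ∑ v, (G.degree v:ℝ)^2 = ∑ i, x i * ((n:ℝ) - x i)^2 :=
        le_antisymm hchain1 (by rw [hEQ]; exact hchain2)
      have hEq2 : ∑ i, x i * ((n:ℝ) - x i)^2 = (r:ℝ) * (c*((n:ℝ)-c)^2) := by
        rw [← hEq1]; exact hEQ
      -- termwise equality in B
      have hBzero : ∀ i : Fin r, (c*((n:ℝ)-c)^2 + ((n:ℝ)-c)*((n:ℝ)-3*c)*(x i - c))
          - x i * ((n:ℝ) - x i)^2 = 0 := by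
        have hsz : ∑ i, ((c*((n:ℝ)-c)^2 + ((n:ℝ)-c)*((n:ℝ)-3*c)*(x i - c))
            - x i * ((n:ℝ) - x i)^2) = 0 := by
          rw [Finset.sum_sub_distrib, hBsum, hEq2]; ring
        have := (Finset.sum_eq_zero_iff_of_nonneg
          (fun i _ => by linarith [hB i])).1 hsz
        exact fun i => this i (Finset.mem_univ i)
      have hfac : ∀ i : Fin r, (x i - c)^2 * (2*(n:ℝ) - 2*c - x i) = 0 := by
        intro i
        have h := hBzero i
        nlinarith [h]
      have hxor : ∀ i : Fin r, x i = c ∨ x i = 2*(n:ℝ) - 2*c := by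
        intro i
        rcases mul_eq_zero.1 (hfac i) with h | h
        · left; have := pow_eq_zero_iff (n := 2) (by norm_num) |>.1 h; linarith
        · right; linarith
      have hnpos : (0:ℝ) < n := by exact_mod_cast hn
      have hxc : ∀ i, x i = c := by
        by_contra hcon
        push_neg at hcon
        obtain ⟨j, hj⟩ := hcon
        have hxj : x j = 2*(n:ℝ) - 2*c := (hxor j).resolve_left hj
        have hge : ∀ i, c ≤ x i := by
          intro i
          rcases hxor i with h | h
          · linarith
          · linarith
        have hsplit : ∑ i ∈ Finset.univ.erase j, x i + x j = ∑ i, x i :=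
          Finset.sum_erase_add _ _ (Finset.mem_univ j)
        have hcard : (Finset.univ.erase j).card = r - 1 := by
          rw [Finset.card_erase_of_mem (Finset.mem_univ j), Finset.card_univ, Fintype.card_fin]
        have hlow : ((r:ℝ) - 1) * c ≤ ∑ i ∈ Finset.univ.erase j, x i := by
          have := Finset.card_nsmul_le_sum (Finset.univ.erase j) x c (fun i _ => hge i)
          rw [hcard, nsmul_eq_mul] at this
          have hcast : ((r - 1 : ℕ):ℝ) = (r:ℝ) - 1 := by
            have : 1 ≤ r := hr
            push_cast [Nat.cast_sub this]
            ring
          rwa [hcast] at this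
        -- n = ∑ x ≥ (2n - 2c) + (r-1)c, with rc = n gives contradiction
        have : (n:ℝ) ≥ (2*(n:ℝ) - 2*c) + ((r:ℝ) - 1)*c := by
          rw [← hxsum, ← hsplit, hxj]; linarith
        have h5 : ((r:ℝ)-1)*c = (n:ℝ) - c := by linear_combination hrc
        linarith [this, h5, hc2, hnpos]
      -- extract m
      have hjex : 0 < r := by omega
      set j0 : Fin r := ⟨0, hjex⟩ with hj0
      set m : ℕ := (Finset.univ.filter fun v => f v = j0).card with hm_def
      have hmc : (m:ℝ) = c := hxc j0
      have hrm : r * m = n := by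
        have : (r:ℝ) * (m:ℝ) = (n:ℝ) := by rw [hmc]; exact hrc
        exact_mod_cast this
      refine ⟨m, hrm, ?_⟩
      -- termwise equality in A
      have hAzero : ∀ v, ((n:ℝ) - x (f v))^2 - (G.degree v:ℝ)^2 = 0 := by
        have hsz : ∑ v, (((n:ℝ) - x (f v))^2 - (G.degree v:ℝ)^2) = 0 := by
          rw [Finset.sum_sub_distrib, hgroup, ← hEq1]; ring
        have := (Finset.sum_eq_zero_iff_of_nonneg (fun v _ => by linarith [hA v])).1 hsz
        exact fun v => this v (Finset.mem_univ v)
      intro v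
      have hdv : (G.degree v:ℝ) = (n:ℝ) - x (f v) := by
        have h := hAzero v
        have hfa : ((n:ℝ) - x (f v) - (G.degree v:ℝ)) * ((n:ℝ) - x (f v) + (G.degree v:ℝ)) = 0 := by
          linear_combination h
        rcases mul_eq_zero.1 hfa with h' | h'
        · linarith
        · have := hdegle v
          have := Nat.cast_nonneg (α := ℝ) (G.degree v)
          linarith
      have hmn : m ≤ n := by
        calc m ≤ r * m := Nat.le_mul_of_pos_left m hjex
        _ = n := hrm
      have : (G.degree v:ℝ) = ((n - m : ℕ):ℝ) := by
        rw [hdv, Nat.cast_sub hmn]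
        have : x (f v) = (m:ℝ) := by rw [hxc (f v), hmc]
        rw [this]
      exact_mod_cast this

theorem stmt7 {V : Type*} [Fintype V] [DecidableEq V] (G : SimpleGraph V) [DecidableRel G.Adj]
    (hn : 0 < Fintype.card V) :
    (genChrom G : ℝ) ≥ (Fintype.card V : ℝ) / ((Fintype.card V : ℝ) - qmDeg G) ∧
    ((genChrom G : ℝ) = (Fintype.card V : ℝ) / ((Fintype.card V : ℝ) - qmDeg G) ↔
      genChrom G ∣ Fintype.card V ∧
        G.IsRegularOfDegree (Fintype.card V * (genChrom G - 1) / genChrom G)) := by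
  classical
  set n := Fintype.card V with hn_def
  have hne : {r | ∃ f : V → Fin r, ∀ i, IsDeltaSet G (Finset.univ.filter fun v => f v = i)}.Nonempty :=
    ⟨n, setNonempty G⟩
  obtain ⟨f, hf⟩ := Nat.sInf_mem hne
  set r := genChrom G with hr_def
  have hr1 : 1 ≤ r := by
    rcases Fintype.card_pos_iff.1 hn with ⟨v⟩
    exact Nat.succ_le_of_lt (Nat.lt_of_le_of_lt (Nat.zero_le _) (f v).isLt)
  obtain ⟨hkey, hkeyEq⟩ := key_lemma G hn hr1 f hf
  set Q : ℝ := ∑ v, (G.degree v:ℝ)^2 with hQ_def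
  have hQ0 : 0 ≤ Q := Finset.sum_nonneg fun v _ => sq_nonneg _
  have hnR : (0:ℝ) < n := by exact_mod_cast hn
  have hrR : (0:ℝ) < r := by exact_mod_cast hr1
  have hqm : qmDeg G = Real.sqrt (Q / n) := rfl
  have hd0 : 0 ≤ qmDeg G := Real.sqrt_nonneg _
  have hdsq : (qmDeg G)^2 = Q / n := Real.sq_sqrt (by positivity)
  have h1rR : (1:ℝ) ≤ (r:ℝ) := by exact_mod_cast hr1
  have hdle : qmDeg G ≤ (n:ℝ)*((r:ℝ)-1)/(r:ℝ) := by
    have h1 : Q / n ≤ ((n:ℝ)*((r:ℝ)-1)/(r:ℝ))^2 := by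
      rw [div_le_iff₀ hnR]
      have hr2pos : (0:ℝ) < (r:ℝ)^2 := by positivity
      refine le_of_mul_le_mul_left ?_ hr2pos
      calc (r:ℝ)^2 * Q ≤ (n:ℝ)^3 * ((r:ℝ)-1)^2 := hkey
        _ = (r:ℝ)^2 * (((n:ℝ)*((r:ℝ)-1)/(r:ℝ))^2 * (n:ℝ)) := by
            field_simp
    calc qmDeg G = Real.sqrt (Q/n) := hqm
      _ ≤ Real.sqrt (((n:ℝ)*((r:ℝ)-1)/(r:ℝ))^2) := Real.sqrt_le_sqrt h1
      _ = (n:ℝ)*((r:ℝ)-1)/(r:ℝ) :=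
          Real.sqrt_sq (div_nonneg (mul_nonneg hnR.le (by linarith)) hrR.le)
  have hnd : (n:ℝ)/(r:ℝ) ≤ (n:ℝ) - qmDeg G := by
    have : (n:ℝ) - (n:ℝ)*((r:ℝ)-1)/(r:ℝ) = (n:ℝ)/(r:ℝ) := by field_simp; ring
    linarith
  have hndpos : (0:ℝ) < (n:ℝ) - qmDeg G := lt_of_lt_of_le (by positivity) hnd
  have hineq : (n:ℝ) / ((n:ℝ) - qmDeg G) ≤ (r:ℝ) := by
    rw [div_le_iff₀ hndpos]
    calc (n:ℝ) = (r:ℝ) * ((n:ℝ)/(r:ℝ)) := by field_simp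
      _ ≤ (r:ℝ) * ((n:ℝ) - qmDeg G) := by
        apply mul_le_mul_of_nonneg_left hnd (le_of_lt hrR)
  refine ⟨hineq, ?_, ?_⟩
  · -- equality → divisibility and regularity
    intro heq
    have hrd : (r:ℝ) * ((n:ℝ) - qmDeg G) = n := by
      rw [heq]; field_simp
    have hQval : (r:ℝ)^2 * Q = (n:ℝ)^3 * ((r:ℝ)-1)^2 := by
      have hQn : Q = n * (qmDeg G)^2 := by
        rw [hdsq]; field_simp
      have hrd' : (r:ℝ) * qmDeg G = (r:ℝ)*(n:ℝ) - n := by linarith [hrd]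
      have step : (r:ℝ)^2 * Q = (n:ℝ) * ((r:ℝ) * qmDeg G)^2 := by rw [hQn]; ring
      rw [step, hrd']
      ring
    obtain ⟨m, hrm, hdeg⟩ := hkeyEq hQval
    have hdvd : r ∣ n := ⟨m, hrm.symm⟩
    refine ⟨hdvd, ?_⟩
    have hmn : m ≤ n := by
      calc m ≤ r * m := Nat.le_mul_of_pos_left m (by omega)
        _ = n := hrm
    have hdivval : n * (r - 1) / r = n - m := by
      have h1 : n * (r - 1) = r * (n - m) := by
        have : (n:ℤ) * ((r:ℤ) - 1) = (r:ℤ) * ((n:ℤ) - (m:ℤ)) := by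
          have hm' : (r:ℤ) * (m:ℤ) = (n:ℤ) := by exact_mod_cast hrm
          linear_combination hm'
        have h2 : ((n * (r-1) : ℕ):ℤ) = ((r * (n - m) : ℕ):ℤ) := by
          push_cast [Nat.cast_sub hmn, Nat.cast_sub hr1]
          exact this
        exact_mod_cast h2
      rw [h1, Nat.mul_div_cancel_left _ (by omega : 0 < r)]
    intro v
    rw [hdivval]
    exact hdeg v
  · -- divisibility and regularity → equality
    rintro ⟨⟨m, hnm⟩, hreg⟩
    have hmpos : 0 < m := by
      rcases Nat.eq_zero_or_pos m with h0 | h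
      · rw [h0, Nat.mul_zero] at hnm; omega
      · exact h
    have hdivval : n * (r - 1) / r = n - m := by
      have hmn : m ≤ n := by
        calc m ≤ r * m := Nat.le_mul_of_pos_left m (by omega)
          _ = n := by omega
      have h1 : n * (r - 1) = r * (n - m) := by
        have : (n:ℤ) * ((r:ℤ) - 1) = (r:ℤ) * ((n:ℤ) - (m:ℤ)) := by
          have hm' : (n:ℤ) = (r:ℤ) * (m:ℤ) := by exact_mod_cast hnm
          linear_combination -hm'
        have h2 : ((n * (r-1) : ℕ):ℤ) = ((r * (n - m) : ℕ):ℤ) := by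
          push_cast [Nat.cast_sub hmn, Nat.cast_sub hr1]
          exact this
        exact_mod_cast h2
      rw [h1, Nat.mul_div_cancel_left _ (by omega : 0 < r)]
    rw [hdivval] at hreg
    have hmn : m ≤ n := by
      calc m ≤ r * m := Nat.le_mul_of_pos_left m (by omega)
        _ = n := by omega
    have hmRn : (m:ℝ) ≤ (n:ℝ) := by exact_mod_cast hmn
    have hqval : qmDeg G = (n:ℝ) - (m:ℝ) := by
      have hterm : ∀ v : V, (G.degree v:ℝ)^2 = ((n:ℝ) - (m:ℝ))^2 := by
        intro v
        rw [hreg v, Nat.cast_sub hmn]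
      have hsum : Q = (n:ℝ) * ((n:ℝ) - (m:ℝ))^2 := by
        rw [hQ_def]
        simp only [hterm]
        rw [Finset.sum_const, Finset.card_univ, nsmul_eq_mul]
      have hdivv : Q / (n:ℝ) = ((n:ℝ) - (m:ℝ))^2 := by
        rw [hsum]; field_simp
      rw [hqm, hdivv]
      exact Real.sqrt_sq (by linarith)
    rw [hqval]
    have hmR : (0:ℝ) < (m:ℝ) := by exact_mod_cast hmpos
    have : (n:ℝ) - ((n:ℝ) - (m:ℝ)) = (m:ℝ) := by ring
    rw [this]
    have hnmR : (n:ℝ) = (r:ℝ) * (m:ℝ) := by exact_mod_cast hnm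
    rw [hnmR]
    field_simp
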